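/- Let (X₁, X₂) be jointly Gaussian with Cov(X₁, X₂) = ν₁₂ and X₁ ~ N(μ₁, ν₁₁) with ν₁₁ > 0. Then Cov(ReLU(X₁), X₂) = ν₁₂ · Φ(μ₁/√ν₁₁), where ReLU(x) = max(0, x). -/

import Mathlib

open MeasureTheory ProbabilityTheory Real
open scoped NNReal
open Filter Set
open scoped ENNReal

noncomputable def npdf (x : ℝ) : ℝ := (Real.sqrt (2 * Real.pi))⁻¹ * Real.exp (-(x ^ 2) / 2)

noncomputable def ncdf (x : ℝ) : ℝ := ∫ t in Set.Iic x, npdf t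

lemma npdf_nonneg (x : ℝ) : 0 ≤ npdf x := by
  unfold npdf
  positivity

lemma continuous_npdf : Continuous npdf := by
  unfold npdf; continuity

lemma npdf_neg (x : ℝ) : npdf (-x) = npdf x := by simp [npdf]

lemma hasDerivAt_npdf (x : ℝ) : HasDerivAt npdf (-x * npdf x) x := by
  have h : HasDerivAt (fun x : ℝ => -(x ^ 2) / 2) (-x) x := by
    have := (hasDerivAt_pow 2 x).neg.div_const 2
    exact this.congr_deriv (by ring)
  have := (h.exp).const_mul ((Real.sqrt (2 * Real.pi))⁻¹)
  exact this.congr_deriv (by unfold npdf; ring)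

lemma npdf_exp (x : ℝ) : npdf x = (Real.sqrt (2 * Real.pi))⁻¹ * Real.exp (-(1/2 : ℝ) * x ^ 2) := by
  unfold npdf; ring_nf

lemma integrable_npdf : Integrable npdf := by
  have h := (integrable_exp_neg_mul_sq (by norm_num : (0:ℝ) < 1/2)).const_mul
    ((Real.sqrt (2 * Real.pi))⁻¹)
  convert h using 2 with x
  rw [npdf_exp]

lemma integrable_mul_npdf : Integrable (fun x => x * npdf x) := by
  have h := (integrable_mul_exp_neg_mul_sq (by norm_num : (0:ℝ) < 1/2)).const_mul
    ((Real.sqrt (2 * Real.pi))⁻¹)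
  convert h using 2 with x
  rw [npdf_exp]; ring

lemma integrable_sq_npdf : Integrable (fun x => x ^ 2 * npdf x) := by
  have h := (integrable_rpow_mul_exp_neg_mul_sq (by norm_num : (0:ℝ) < 1/2)
    (by norm_num : (-1:ℝ) < 2)).const_mul ((Real.sqrt (2 * Real.pi))⁻¹)
  convert h using 2 with x
  rw [npdf_exp, show ((2:ℝ)) = ((2:ℕ):ℝ) by norm_num, Real.rpow_natCast]
  ring

lemma integrable_abs_npdf : Integrable (fun x => |x| * npdf x) := by
  have h := integrable_mul_npdf.abs
  convert h using 2 with x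
  rw [abs_mul, abs_of_nonneg (npdf_nonneg x)]

lemma tendsto_npdf_atTop : Tendsto npdf atTop (nhds 0) := by
  have h1 : Tendsto (fun x : ℝ => -(x ^ 2) / 2) atTop atBot := by
    apply Tendsto.atBot_div_const (by norm_num : (0:ℝ) < 2)
    exact tendsto_neg_atTop_atBot.comp (tendsto_pow_atTop (by norm_num : 2 ≠ 0))
  have h2 := (Real.tendsto_exp_atBot.comp h1).const_mul ((Real.sqrt (2 * Real.pi))⁻¹)
  rw [mul_zero] at h2
  exact h2.congr fun x => rfl

lemma tendsto_mul_npdf_atTop : Tendsto (fun x => x * npdf x) atTop (nhds 0) := by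
  have hlo := rpow_mul_exp_neg_mul_sq_isLittleO_exp_neg (by norm_num : (0:ℝ) < 1/2) 1
  have hexp : Tendsto (fun x : ℝ => Real.exp (-(1/2) * x)) atTop (nhds 0) := by
    apply Real.tendsto_exp_atBot.comp
    exact (tendsto_id.const_mul_atTop_of_neg (by norm_num : (-(1/2):ℝ) < 0))
  have h := hlo.isBigO.trans_tendsto hexp
  have h2 := h.const_mul ((Real.sqrt (2 * Real.pi))⁻¹)
  rw [mul_zero] at h2
  apply h2.congr'
  filter_upwards with x
  rw [npdf_exp, Real.rpow_one]; ring

lemma tendsto_npdf_atBot : Tendsto npdf atBot (nhds 0) := by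
  have := tendsto_npdf_atTop.comp tendsto_neg_atBot_atTop
  exact this.congr fun x => npdf_neg x

lemma tendsto_mul_npdf_atBot : Tendsto (fun x => x * npdf x) atBot (nhds 0) := by
  have := (tendsto_mul_npdf_atTop.comp tendsto_neg_atBot_atTop).neg
  rw [neg_zero] at this
  apply this.congr
  intro x
  simp only [Function.comp_apply, npdf_neg]
  ring

lemma integral_Ioi_mul_npdf (t : ℝ) : ∫ x in Set.Ioi t, x * npdf x = npdf t := by
  have h := integral_Ioi_of_hasDerivAt_of_tendsto' (f := fun x => -npdf x)
    (f' := fun x => x * npdf x) (a := t) (m := 0)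
    (fun x _ => by simpa [Pi.neg_def] using (hasDerivAt_npdf x).neg)
    integrable_mul_npdf.integrableOn
    (by simpa using tendsto_npdf_atTop.neg)
  simpa using h

lemma integral_Iic_mul_npdf (t : ℝ) : ∫ x in Set.Iic t, x * npdf x = -npdf t := by
  have h := integral_Iic_of_hasDerivAt_of_tendsto' (f := fun x => -npdf x)
    (f' := fun x => x * npdf x) (a := t) (m := 0)
    (fun x _ => by simpa [Pi.neg_def] using (hasDerivAt_npdf x).neg)
    integrable_mul_npdf.integrableOn
    (by simpa using tendsto_npdf_atBot.neg)
  simpa using h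

lemma integral_npdf_total : ∫ x, npdf x = 1 := by
  have h : ∫ x : ℝ, Real.exp (-(1/2 : ℝ) * x ^ 2) = Real.sqrt (2 * Real.pi) := by
    rw [integral_gaussian]
    rw [show Real.pi / (1/2) = 2 * Real.pi by ring]
  calc ∫ x, npdf x = (Real.sqrt (2 * Real.pi))⁻¹ * ∫ x : ℝ, Real.exp (-(1/2 : ℝ) * x ^ 2) := by
        rw [← integral_const_mul]
        congr 1 with x
        rw [npdf_exp]
    _ = 1 := by
        rw [h]
        apply inv_mul_cancel₀
        positivity

lemma integral_Ioi_npdf (t : ℝ) : ∫ x in Set.Ioi t, npdf x = 1 - ncdf t := by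
  have h := integral_add_compl (measurableSet_Iic (a := t)) integrable_npdf
  rw [compl_Iic] at h
  rw [integral_npdf_total] at h
  have : ncdf t = ∫ x in Set.Iic t, npdf x := rfl
  linarith

lemma hasDerivAt_neg_mul_npdf (x : ℝ) :
    HasDerivAt (fun x => -(x * npdf x)) (x ^ 2 * npdf x - npdf x) x := by
  have := ((hasDerivAt_id x).mul (hasDerivAt_npdf x)).neg
  exact this.congr_deriv (by simp only [id_eq]; ring)

lemma integral_Ioi_sq_npdf (t : ℝ) :
    ∫ x in Set.Ioi t, x ^ 2 * npdf x = t * npdf t + (1 - ncdf t) := by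
  have hint : IntegrableOn (fun x => x ^ 2 * npdf x - npdf x) (Set.Ioi t) :=
    (integrable_sq_npdf.sub integrable_npdf).integrableOn
  have hten : Tendsto (fun x => -(x * npdf x)) atTop (nhds 0) := by
    simpa using tendsto_mul_npdf_atTop.neg
  have h := integral_Ioi_of_hasDerivAt_of_tendsto'
    (fun x _ => hasDerivAt_neg_mul_npdf x) hint hten
  rw [integral_sub (integrable_sq_npdf.integrableOn) (integrable_npdf.integrableOn)] at h
  rw [integral_Ioi_npdf] at h
  simp only [zero_sub, neg_neg] at h
  linarith

lemma integral_Iic_sq_npdf (t : ℝ) :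
    ∫ x in Set.Iic t, x ^ 2 * npdf x = -(t * npdf t) + ncdf t := by
  have hint : IntegrableOn (fun x => x ^ 2 * npdf x - npdf x) (Set.Iic t) :=
    (integrable_sq_npdf.sub integrable_npdf).integrableOn
  have hten : Tendsto (fun x => -(x * npdf x)) atBot (nhds 0) := by
    simpa using tendsto_mul_npdf_atBot.neg
  have h := integral_Iic_of_hasDerivAt_of_tendsto'
    (fun x _ => hasDerivAt_neg_mul_npdf x) hint hten
  rw [integral_sub (integrable_sq_npdf.integrableOn) (integrable_npdf.integrableOn)] at h
  have : ncdf t = ∫ x in Set.Iic t, npdf x := rfl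
  rw [← this] at h
  linarith

lemma ncdf_neg (t : ℝ) : ncdf (-t) = 1 - ncdf t := by
  unfold ncdf
  rw [← integral_comp_neg_Ioi]
  simp_rw [npdf_neg]
  exact integral_Ioi_npdf t

lemma measurable_npdf : Measurable npdf := continuous_npdf.measurable

lemma integrable_bound {h : ℝ → ℝ} (hc : Continuous h) (C : ℝ)
    (hb : ∀ x, |h x| ≤ C * (1 + |x| + x ^ 2)) :
    Integrable (fun x => h x * npdf x) := by
  have hg : Integrable (fun x => C * (npdf x + |x| * npdf x + x ^ 2 * npdf x)) :=
    ((integrable_npdf.add integrable_abs_npdf).add integrable_sq_npdf).const_mul C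
  apply Integrable.mono' hg ((hc.mul continuous_npdf).aestronglyMeasurable)
  filter_upwards with x
  have h1 : |h x * npdf x| = |h x| * npdf x := by
    rw [abs_mul, abs_of_nonneg (npdf_nonneg x)]
  rw [Real.norm_eq_abs, Pi.mul_apply, h1]
  calc |h x| * npdf x ≤ C * (1 + |x| + x ^ 2) * npdf x :=
        mul_le_mul_of_nonneg_right (hb x) (npdf_nonneg x)
    _ = C * (npdf x + |x| * npdf x + x ^ 2 * npdf x) := by ring

lemma bound_helper (p q r s x : ℝ) (hp : 0 ≤ p) (hq : 0 ≤ q) (hr : 0 ≤ r) (hs : 0 ≤ s) :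
    (p + q * |x|) * (r + s * |x|) ≤ (p + q) * (r + s) * (1 + |x| + x ^ 2) := by
  have hx : 0 ≤ |x| := abs_nonneg x
  have hx2 : |x| ^ 2 = x ^ 2 := sq_abs x
  nlinarith [mul_nonneg hp hr, mul_nonneg hp hs, mul_nonneg hq hr, mul_nonneg hq hs,
    mul_nonneg (mul_nonneg hp hr) hx, mul_nonneg (mul_nonneg hp hs) hx,
    mul_nonneg (mul_nonneg hq hr) hx, mul_nonneg (mul_nonneg hq hs) hx,
    mul_nonneg (mul_nonneg hp hr) (sq_nonneg x), mul_nonneg (mul_nonneg hq hs) (sq_nonneg x),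
    mul_nonneg (mul_nonneg hp hs) (sq_nonneg x), mul_nonneg (mul_nonneg hq hr) (sq_nonneg x)]

lemma relu_abs_le (μ₁ a x : ℝ) : |max 0 (μ₁ + a * x)| ≤ |μ₁| + |a| * |x| := by
  rw [abs_of_nonneg (le_max_left 0 _)]
  refine max_le (by positivity) ?_
  calc μ₁ + a * x ≤ |μ₁ + a * x| := le_abs_self _
    _ ≤ |μ₁| + |a| * |x| := by rw [← abs_mul]; exact abs_add_le _ _

lemma key (μ₁ a : ℝ) (ha : a ≠ 0) :
    ∫ x, x * max 0 (μ₁ + a * x) * npdf x = a * ncdf (μ₁ / |a|) := by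
  have hind : (fun x => x * max 0 (μ₁ + a * x) * npdf x)
      = Set.indicator {x : ℝ | 0 ≤ μ₁ + a * x} (fun x => x * (μ₁ + a * x) * npdf x) := by
    funext x
    by_cases h : 0 ≤ μ₁ + a * x
    · rw [Set.indicator_of_mem (show x ∈ {x : ℝ | 0 ≤ μ₁ + a * x} from h), max_eq_right h]
    · rw [Set.indicator_of_notMem (show x ∉ {x : ℝ | 0 ≤ μ₁ + a * x} from h),
        max_eq_left (le_of_lt (not_le.mp h))]
      ring
  set t := -μ₁ / a with ht
  have hat : a * t = -μ₁ := by
    rw [ht]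
    field_simp
  have hsplit : ∀ x : ℝ, x * (μ₁ + a * x) * npdf x
      = μ₁ * (x * npdf x) + a * (x ^ 2 * npdf x) := fun x => by ring
  rcases ha.lt_or_gt with hneg | hpos
  · have hset : {x : ℝ | 0 ≤ μ₁ + a * x} = Set.Iic t := by
      ext x
      simp only [Set.mem_setOf_eq, Set.mem_Iic]
      constructor <;> intro h <;> nlinarith
    rw [hind, hset, integral_indicator measurableSet_Iic]
    simp_rw [hsplit]
    rw [integral_add ((integrable_mul_npdf.const_mul μ₁).integrableOn)
      ((integrable_sq_npdf.const_mul a).integrableOn), integral_const_mul, integral_const_mul,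
      integral_Iic_mul_npdf, integral_Iic_sq_npdf]
    have h2 : μ₁ / |a| = t := by
      rw [abs_of_neg hneg, ht, div_neg, neg_div]
    rw [h2]
    linear_combination (-(npdf t)) * hat
  · have hset : {x : ℝ | 0 ≤ μ₁ + a * x} = Set.Ici t := by
      ext x
      simp only [Set.mem_setOf_eq, Set.mem_Ici]
      constructor <;> intro h <;> nlinarith
    rw [hind, hset, integral_indicator measurableSet_Ici,
      setIntegral_congr_set (Ioi_ae_eq_Ici (a := t)).symm]
    simp_rw [hsplit]
    rw [integral_add ((integrable_mul_npdf.const_mul μ₁).integrableOn)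
      ((integrable_sq_npdf.const_mul a).integrableOn), integral_const_mul, integral_const_mul,
      integral_Ioi_mul_npdf, integral_Ioi_sq_npdf]
    have h2 : μ₁ / |a| = -t := by
      rw [abs_of_pos hpos, ht, neg_div, neg_neg]
    rw [h2, ncdf_neg]
    linear_combination (npdf t) * hat

lemma npdf_eq_gaussianPDFReal : npdf = gaussianPDFReal 0 1 := by
  funext x
  simp only [gaussianPDFReal, npdf, NNReal.coe_one, mul_one, sub_zero]

lemma gaussianReal_std : gaussianReal 0 1
    = (volume : Measure ℝ).withDensity (fun x => ENNReal.ofReal (npdf x)) := by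
  rw [gaussianReal_of_var_ne_zero 0 one_ne_zero]
  congr 1
  funext x
  rw [npdf_eq_gaussianPDFReal]
  rfl

lemma integral_gaussian_eq (h : ℝ → ℝ) :
    ∫ x, h x ∂(gaussianReal 0 1) = ∫ x, h x * npdf x := by
  rw [gaussianReal_std]
  have heq : (fun x => ENNReal.ofReal (npdf x))
      = (fun x => ((Real.toNNReal (npdf x) : ℝ≥0) : ℝ≥0∞)) := rfl
  rw [heq, integral_withDensity_eq_integral_smul (measurable_npdf.real_toNNReal)]
  congr 1 with x
  simp [NNReal.smul_def, Real.coe_toNNReal _ (npdf_nonneg x), mul_comm]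

lemma integrable_gaussian_iff (h : ℝ → ℝ) :
    Integrable h (gaussianReal 0 1) ↔ Integrable (fun x => h x * npdf x) := by
  rw [gaussianReal_std, integrable_withDensity_iff (measurable_npdf.ennreal_ofReal)
    (by filter_upwards with x; exact ENNReal.ofReal_lt_top)]
  have heq : (fun x => h x * (ENNReal.ofReal (npdf x)).toReal) = fun x => h x * npdf x := by
    funext x
    rw [ENNReal.toReal_ofReal (npdf_nonneg x)]
  rw [heq]

lemma integral_id_gaussian : ∫ x, x ∂(gaussianReal 0 1) = 0 := by
  rw [integral_gaussian_eq]
  rw [← integral_add_compl (measurableSet_Iic (a := (0:ℝ))) integrable_mul_npdf, compl_Iic,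
    integral_Iic_mul_npdf, integral_Ioi_mul_npdf]
  ring

noncomputable def P2 : Measure (ℝ × ℝ) :=
  (ProbabilityTheory.gaussianReal 0 1).prod (ProbabilityTheory.gaussianReal 0 1)

theorem gaussian_cov_relu_linear (μ₁ μ₂ ν₁₁ ν₂₂ ν₁₂ a b c : ℝ)
    (h11 : ν₁₁ = a ^ 2) (h22 : ν₂₂ = b ^ 2 + c ^ 2) (h12 : ν₁₂ = a * b)
    (hp1 : 0 < ν₁₁) :
    (∫ w : ℝ × ℝ, max 0 (μ₁ + a * w.1) * (μ₂ + b * w.1 + c * w.2) ∂P2)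
        - (∫ w : ℝ × ℝ, max 0 (μ₁ + a * w.1) ∂P2) * μ₂
      = ν₁₂ * ncdf (μ₁ / Real.sqrt ν₁₁) := by
  have ha : a ≠ 0 := by
    intro h
    rw [h11, h, pow_two, mul_zero] at hp1
    exact lt_irrefl 0 hp1
  -- bounds for integrability
  have hbf : ∀ x : ℝ, |max 0 (μ₁ + a * x)| ≤ (|μ₁| + |a|) * 1 * (1 + |x| + x ^ 2) := by
    intro x
    calc |max 0 (μ₁ + a * x)| ≤ |μ₁| + |a| * |x| := relu_abs_le μ₁ a x
      _ = (|μ₁| + |a| * |x|) * (1 + 0 * |x|) := by ring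
      _ ≤ (|μ₁| + |a|) * (1 + 0) * (1 + |x| + x ^ 2) :=
          bound_helper _ _ _ _ x (abs_nonneg _) (abs_nonneg _) zero_le_one le_rfl
      _ = (|μ₁| + |a|) * 1 * (1 + |x| + x ^ 2) := by ring
  have hbg : ∀ x : ℝ, |max 0 (μ₁ + a * x) * (μ₂ + b * x)|
      ≤ (|μ₁| + |a|) * (|μ₂| + |b|) * (1 + |x| + x ^ 2) := by
    intro x
    rw [abs_mul]
    calc |max 0 (μ₁ + a * x)| * |μ₂ + b * x|
        ≤ (|μ₁| + |a| * |x|) * (|μ₂| + |b| * |x|) := by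
          apply mul_le_mul (relu_abs_le μ₁ a x) _ (abs_nonneg _) (by positivity)
          calc |μ₂ + b * x| ≤ |μ₂| + |b * x| := abs_add_le _ _
            _ = |μ₂| + |b| * |x| := by rw [abs_mul]
      _ ≤ (|μ₁| + |a|) * (|μ₂| + |b|) * (1 + |x| + x ^ 2) :=
          bound_helper _ _ _ _ x (abs_nonneg _) (abs_nonneg _) (abs_nonneg _) (abs_nonneg _)
  have hbx : ∀ x : ℝ, |x * max 0 (μ₁ + a * x)| ≤ 1 * (|μ₁| + |a|) * (1 + |x| + x ^ 2) := by
    intro x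
    rw [abs_mul]
    calc |x| * |max 0 (μ₁ + a * x)| ≤ (0 + 1 * |x|) * (|μ₁| + |a| * |x|) := by
          rw [zero_add, one_mul]
          exact mul_le_mul_of_nonneg_left (relu_abs_le μ₁ a x) (abs_nonneg x)
      _ ≤ (0 + 1) * (|μ₁| + |a|) * (1 + |x| + x ^ 2) :=
          bound_helper _ _ _ _ x le_rfl zero_le_one (abs_nonneg _) (abs_nonneg _)
      _ = 1 * (|μ₁| + |a|) * (1 + |x| + x ^ 2) := by ring
  have hcl : Continuous fun x : ℝ => μ₁ + a * x := by continuity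
  have hcf : Continuous fun x : ℝ => max 0 (μ₁ + a * x) := continuous_const.max hcl
  -- volume-side integrability
  have vf : Integrable (fun x => max 0 (μ₁ + a * x) * npdf x) :=
    integrable_bound hcf _ hbf
  have vg : Integrable (fun x => max 0 (μ₁ + a * x) * (μ₂ + b * x) * npdf x) :=
    integrable_bound (hcf.mul (by continuity)) _ hbg
  have vx : Integrable (fun x => x * max 0 (μ₁ + a * x) * npdf x) :=
    integrable_bound (continuous_id.mul hcf) _ hbx
  -- gaussian-side integrability
  have hf : Integrable (fun x => max 0 (μ₁ + a * x)) (gaussianReal 0 1) :=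
    (integrable_gaussian_iff _).mpr vf
  have hg1 : Integrable (fun x => max 0 (μ₁ + a * x) * (μ₂ + b * x)) (gaussianReal 0 1) :=
    (integrable_gaussian_iff _).mpr vg
  have hid : Integrable (fun x : ℝ => x) (gaussianReal 0 1) := by
    rw [integrable_gaussian_iff]
    exact integrable_mul_npdf
  have hP2 : P2 = (gaussianReal 0 1).prod (gaussianReal 0 1) := rfl
  -- second integral
  have e2 : (∫ w : ℝ × ℝ, max 0 (μ₁ + a * w.1) ∂P2)
      = ∫ x, max 0 (μ₁ + a * x) ∂(gaussianReal 0 1) := by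
    have h := integral_prod_mul (μ := gaussianReal 0 1) (ν := gaussianReal 0 1)
      (fun x => max 0 (μ₁ + a * x)) (fun _ => (1 : ℝ))
    simp only [mul_one, integral_const, measure_univ, ENNReal.toReal_one, probReal_univ, smul_eq_mul] at h
    rw [hP2, h]
  -- first integral
  have e1 : (∫ w : ℝ × ℝ, max 0 (μ₁ + a * w.1) * (μ₂ + b * w.1 + c * w.2) ∂P2)
      = ∫ x, max 0 (μ₁ + a * x) * (μ₂ + b * x) ∂(gaussianReal 0 1) := by
    rw [hP2]
    have hrw : ∀ w : ℝ × ℝ, max 0 (μ₁ + a * w.1) * (μ₂ + b * w.1 + c * w.2)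
        = (max 0 (μ₁ + a * w.1) * (μ₂ + b * w.1)) * (1 : ℝ)
          + (c * max 0 (μ₁ + a * w.1)) * w.2 := fun w => by ring
    simp_rw [hrw]
    rw [integral_add (hg1.mul_prod (integrable_const 1)) ((hf.const_mul c).mul_prod hid),
      integral_prod_mul (f := fun x => max 0 (μ₁ + a * x) * (μ₂ + b * x)) (g := fun _ => (1 : ℝ)),
      integral_prod_mul (f := fun x => c * max 0 (μ₁ + a * x)) (g := fun y => y),
      integral_id_gaussian]
    simp [integral_const, measure_univ]
  rw [e1, e2, integral_gaussian_eq, integral_gaussian_eq]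
  have hexp : ∀ x : ℝ, max 0 (μ₁ + a * x) * (μ₂ + b * x) * npdf x
      = μ₂ * (max 0 (μ₁ + a * x) * npdf x) + b * (x * max 0 (μ₁ + a * x) * npdf x) :=
    fun x => by ring
  simp_rw [hexp]
  rw [integral_add (vf.const_mul μ₂) (vx.const_mul b), integral_const_mul, integral_const_mul,
    key μ₁ a ha, h12, h11, Real.sqrt_sq_eq_abs]
  ring
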